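/- Let E be a Banach lattice, u₀ ∈ E⁺, δ>0, and let x₁*,…,x_N* be mutually disjoint elements of the positive cone of E*. If ⟨u₀, xₙ*⟩ ≥ δ for all 1 ≤ n ≤ N and {xₙ*}_{n=1}^N ⊆ [−y*, y*] + (δ/2)·B_{ρ_{u₀}} for some y* ∈ (E*)⁺, then N ≤ 2⟨u₀, y*⟩/δ. -/

import Mathlib

open Filter

variable {E : Type*} [NormedAddCommGroup E] [Lattice E] [HasSolidNorm E] [IsOrderedAddMonoid E]
  [NormedSpace ℝ E]

/-- Riesz–Kantorovich formula for disjointness of two positive functionals: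
`φ ⊓ χ = 0` iff `inf { φ(y) + χ(x-y) : 0 ≤ y ≤ x } = 0` for all `x ≥ 0`. -/
def DualDisjointPos (φ χ : E →L[ℝ] ℝ) : Prop :=
  ∀ x : E, 0 ≤ x → ∀ ε : ℝ, 0 < ε → ∃ y : E, 0 ≤ y ∧ y ≤ x ∧ φ y + χ (x - y) < ε

/-- The Riesz seminorm `ρ_{u₀}(φ) = ⟨u₀, |φ|⟩`, computed via the Riesz–Kantorovich
formula `⟨u₀, |φ|⟩ = sup { φ(y) : |y| ≤ u₀ }`. -/
noncomputable def rhoEval (u₀ : E) (φ : E →L[ℝ] ℝ) : ℝ :=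
  ⨆ y : {y : E // |y| ≤ u₀}, φ y

/-- `φ` lies in the order interval `[-χ, χ]` of the dual, i.e. `-χ ≤ φ ≤ χ`
(with the dual order given by testing against the positive cone). -/
def MemDualInterval (φ χ : E →L[ℝ] ℝ) : Prop :=
  ∀ x : E, 0 ≤ x → -(χ x) ≤ φ x ∧ φ x ≤ χ x

/-- Auxiliary: running suprema of a sequence, starting from `z`. -/
def supSeq {L : Type*} [SemilatticeSup L] (u : ℕ → L) (z : L) : ℕ → L
  | 0 => z
  | (k+1) => supSeq u z k ⊔ u k

lemma supSeq_succ {L : Type*} [SemilatticeSup L] (u : ℕ → L) (z : L) (k : ℕ) :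
    supSeq u z (k+1) = supSeq u z k ⊔ u k := rfl

lemma supSeq_nonneg {L : Type*} [AddCommGroup L] [Lattice L] [IsOrderedAddMonoid L]
    (u : ℕ → L) (_hu : ∀ k, 0 ≤ u k) : ∀ k, (0 : L) ≤ supSeq u 0 k := by
  intro k
  induction k with
  | zero => exact le_refl _
  | succ k ih => exact le_trans ih le_sup_left

lemma supSeq_le {L : Type*} [Lattice L] (u : ℕ → L) (z c : L) (hz : z ≤ c)
    (hu : ∀ k, u k ≤ c) : ∀ k, supSeq u z k ≤ c
  | 0 => hz
  | (k+1) => sup_le (supSeq_le u z c hz hu k) (hu k)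

lemma supSeq_mono {L : Type*} [SemilatticeSup L] (u : ℕ → L) (z : L) (k : ℕ) :
    supSeq u z k ≤ supSeq u z (k+1) := le_sup_left

lemma supSeq_le_sum {L : Type*} [AddCommGroup L] [Lattice L] [IsOrderedAddMonoid L]
    (u : ℕ → L) (hu : ∀ k, 0 ≤ u k) :
    ∀ k, supSeq u 0 k ≤ ∑ i ∈ Finset.range k, u i := by
  intro k
  induction k with
  | zero => simp [supSeq]
  | succ k ih =>
    rw [supSeq_succ, Finset.sum_range_succ]
    exact sup_le (le_trans ih (le_add_of_nonneg_right (hu k)))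
      (le_add_of_nonneg_left (Finset.sum_nonneg fun i _ => hu i))

/-- **Statement 13.** Let `E` be a Banach lattice, `u₀ ∈ E⁺`, `δ > 0`, and let
`x₁*,…,x_N*` be mutually disjoint positive functionals.  If `⟨u₀, xₙ*⟩ ≥ δ` for all `n`
and `{xₙ*} ⊆ [-y*, y*] + (δ/2)·B_{ρ_{u₀}}` for some `y* ∈ (E*)⁺`, then
`N ≤ 2⟨u₀, y*⟩/δ`. -/
theorem card_le_of_disjoint_almost_orderBounded {E : Type*}
    [NormedAddCommGroup E] [Lattice E] [HasSolidNorm E] [IsOrderedAddMonoid E]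
    [NormedSpace ℝ E] [CompleteSpace E]
    (u₀ : E) (hu₀ : 0 ≤ u₀) (δ : ℝ) (hδ : 0 < δ) (N : ℕ)
    (x : Fin N → E →L[ℝ] ℝ) (hxpos : ∀ n, ∀ a : E, 0 ≤ a → 0 ≤ x n a)
    (hdisj : ∀ n m : Fin N, n ≠ m → DualDisjointPos (x n) (x m))
    (hlb : ∀ n, δ ≤ x n u₀)
    (y : E →L[ℝ] ℝ) (hy : ∀ a : E, 0 ≤ a → 0 ≤ y a)
    (hcontain : ∀ n, ∃ z w : E →L[ℝ] ℝ,
      x n = z + w ∧ MemDualInterval z y ∧ rhoEval u₀ w ≤ δ / 2) :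
    (N : ℝ) ≤ 2 * y u₀ / δ := by
  have hyu₀ : 0 ≤ y u₀ := hy u₀ hu₀
  rcases Nat.eq_zero_or_pos N with h0 | hNpos
  · subst h0; simp; positivity
  -- monotonicity of positive functionals
  have mono : ∀ (φ : E →L[ℝ] ℝ), (∀ a : E, 0 ≤ a → 0 ≤ φ a) →
      ∀ v v' : E, v ≤ v' → φ v ≤ φ v' := by
    intro φ hφ v v' h
    have h1 := hφ (v' - v) (sub_nonneg.2 h)
    rw [map_sub] at h1
    linarith
  -- evaluation bounded by rhoEval
  have hrho : ∀ (φ : E →L[ℝ] ℝ) (v : E), |v| ≤ u₀ → φ v ≤ rhoEval u₀ φ := by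
    intro φ v hv
    have hbdd : BddAbove (Set.range fun t : {t : E // |t| ≤ u₀} => φ t) := by
      refine ⟨‖φ‖ * ‖u₀‖, ?_⟩
      rintro r ⟨⟨t, ht⟩, rfl⟩
      calc φ t ≤ |φ t| := le_abs_self _
        _ = ‖φ t‖ := (Real.norm_eq_abs _).symm
        _ ≤ ‖φ‖ * ‖t‖ := φ.le_opNorm t
        _ ≤ ‖φ‖ * ‖u₀‖ := by
            have : ‖t‖ ≤ ‖u₀‖ := HasSolidNorm.solid (x := t) (y := u₀) (by rw [abs_of_nonneg hu₀]; exact ht)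
            exact mul_le_mul_of_nonneg_left this (norm_nonneg φ)
    exact le_ciSup hbdd ⟨v, hv⟩
  choose z w hzw hz hw using hcontain
  -- Key estimate for every ε > 0.
  have key : ∀ ε : ℝ, 0 < ε → (N : ℝ) * (δ / 2) ≤ y u₀ + (N : ℝ) * (2 * N * ε) := by
    intro ε hε
    have ha : ∀ m n : Fin N, ∃ a : E, 0 ≤ a ∧ a ≤ u₀ ∧ x m (u₀ - a) < ε ∧
        (m ≠ n → x n a < ε) := by
      intro m n
      by_cases hmn : m = n
      · exact ⟨u₀, hu₀, le_refl _, by simpa using hε, fun h => absurd hmn h⟩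
      · obtain ⟨y', hy1, hy2, hy3⟩ := hdisj m n hmn u₀ hu₀ ε hε
        have h4 := hxpos n (u₀ - y') (sub_nonneg.2 hy2)
        have h5 := hxpos m y' hy1
        refine ⟨u₀ - y', sub_nonneg.2 hy2, by simpa using hy1, ?_, fun _ => by linarith⟩
        have : u₀ - (u₀ - y') = y' := by abel
        rw [this]; linarith
    choose a ha0 hau hax1 hax2 using ha
    haveI : Nonempty (Fin N) := ⟨⟨0, hNpos⟩⟩
    set u : Fin N → E := fun m => Finset.univ.inf' Finset.univ_nonempty (a m) with hu_def
    have hu0 : ∀ m, 0 ≤ u m := fun m =>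
      Finset.le_inf' _ _ fun n _ => ha0 m n
    have huu : ∀ m, u m ≤ u₀ := fun m =>
      le_trans (Finset.inf'_le _ (Finset.mem_univ m)) (hau m m)
    have hun : ∀ m n : Fin N, m ≠ n → x n (u m) < ε := fun m n hmn =>
      lt_of_le_of_lt (mono _ (hxpos n) _ _ (Finset.inf'_le _ (Finset.mem_univ n))) (hax2 m n hmn)
    have hxmu : ∀ m, x m (u₀ - u m) ≤ N * ε := by
      intro m
      have hsub : u₀ - u m ≤ ∑ n : Fin N, (u₀ - a m n) := by
        rw [sub_le_iff_le_add]
        -- u₀ ≤ ∑ (u₀ - a m n) + u m : show u₀ - ∑ (u₀ - a m n) ≤ u m = inf a m n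
        rw [← sub_le_iff_le_add']
        refine Finset.le_inf' _ _ fun n _ => ?_
        exact sub_le_comm.mp (Finset.single_le_sum (f := fun k => u₀ - a m k)
          (fun k _ => sub_nonneg.2 (hau m k)) (Finset.mem_univ n))
      calc x m (u₀ - u m) ≤ x m (∑ n : Fin N, (u₀ - a m n)) := mono _ (hxpos m) _ _ hsub
        _ = ∑ n : Fin N, x m (u₀ - a m n) := map_sum _ _ _
        _ ≤ ∑ _n : Fin N, ε := Finset.sum_le_sum fun n _ => le_of_lt (hax1 m n)
        _ = N * ε := by simp [mul_comm]
    -- extended sequence and running sups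
    set u' : ℕ → E := fun k => if h : k < N then u ⟨k, h⟩ else 0 with hu'_def
    have hu'0 : ∀ k, 0 ≤ u' k := by
      intro k; simp only [hu'_def]; split
      · exact hu0 _
      · exact le_refl _
    have hu'u : ∀ k, u' k ≤ u₀ := by
      intro k; simp only [hu'_def]; split
      · exact huu _
      · exact hu₀
    set s : ℕ → E := supSeq u' 0 with hs_def
    have hs0 : ∀ k, 0 ≤ s k := supSeq_nonneg u' hu'0
    have hsu : ∀ k, s k ≤ u₀ := supSeq_le u' 0 u₀ hu₀ hu'u
    set v : ℕ → E := fun k => s (k+1) - s k with hv_def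
    have hv0 : ∀ k, 0 ≤ v k := fun k => sub_nonneg.2 (supSeq_mono u' 0 k)
    have hvu : ∀ k, v k ≤ u₀ := fun k =>
      le_trans (sub_le_self _ (hs0 k)) (hsu (k+1))
    have hvabs : ∀ k, |v k| ≤ u₀ := fun k => by
      rw [abs_of_nonneg (hv0 k)]; exact hvu k
    -- lower bound for y (v m)
    have hyv : ∀ m : Fin N, δ / 2 - 2 * N * ε ≤ y (v m) := by
      intro m
      -- x m (s m) ≤ N * ε
      have hsm : x m (s m) ≤ N * ε := by
        have h1 : s (m : ℕ) ≤ ∑ i ∈ Finset.range m, u' i := supSeq_le_sum u' hu'0 m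
        calc x m (s m) ≤ x m (∑ i ∈ Finset.range m, u' i) := mono _ (hxpos m) _ _ h1
          _ = ∑ i ∈ Finset.range m, x m (u' i) := map_sum _ _ _
          _ ≤ ∑ _i ∈ Finset.range m, ε := by
              refine Finset.sum_le_sum fun i hi => ?_
              have hiN : i < N := lt_trans (Finset.mem_range.1 hi) m.isLt
              have him : (⟨i, hiN⟩ : Fin N) ≠ m := by
                intro h
                have := Finset.mem_range.1 hi
                rw [Fin.ext_iff] at h
                simp only [] at h
                omega
              simp only [hu'_def, dif_pos hiN]
              exact le_of_lt (hun _ m him)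
          _ = (m : ℕ) * ε := by simp [mul_comm]
          _ ≤ N * ε := by
              have : ((m : ℕ) : ℝ) ≤ N := by exact_mod_cast le_of_lt m.isLt
              nlinarith
      -- x m (v m) ≥ δ - 2 N ε
      have hvm : δ - 2 * N * ε ≤ x m (v m) := by
        have h1 : u' (m : ℕ) - s m ≤ v m := by
          simp only [hv_def]
          have : u' (m : ℕ) ≤ s ((m : ℕ) + 1) := by
            rw [hs_def, supSeq_succ]; exact le_sup_right
          exact sub_le_sub_right this _
        have h2 : x m (u' (m : ℕ) - s m) ≤ x m (v m) := mono _ (hxpos m) _ _ h1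
        rw [map_sub] at h2
        have h3 : u' (m : ℕ) = u m := by simp [hu'_def, m.isLt]
        rw [h3] at h2
        have h4 : x m (u m) = x m u₀ - x m (u₀ - u m) := by rw [map_sub]; ring
        have h5 := hxmu m
        have h6 := hlb m
        linarith
      -- y (v m) ≥ x m (v m) - δ/2
      obtain ⟨hz1, hz2⟩ := hz m (v m) (hv0 m)
      have hwv : w m (v m) ≤ δ / 2 := le_trans (hrho (w m) (v m) (hvabs m)) (hw m)
      have hx_split : x m (v m) = z m (v m) + w m (v m) := by
        rw [hzw m]; rfl
      have hyz := (hz m (v m) (hv0 m)).2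
      linarith
    -- sum up
    have hsum : ∑ k ∈ Finset.range N, y (v k) ≤ y u₀ := by
      have h1 : ∑ k ∈ Finset.range N, v k = s N := by
        simp only [hv_def]
        rw [Finset.sum_range_sub (fun k => s k)]
        simp [hs_def, supSeq]
      calc ∑ k ∈ Finset.range N, y (v k) = y (∑ k ∈ Finset.range N, v k) := (map_sum _ _ _).symm
        _ = y (s N) := by rw [h1]
        _ ≤ y u₀ := mono _ hy _ _ (hsu N)
    have h2 : (N : ℝ) * (δ / 2 - 2 * N * ε) ≤ ∑ k ∈ Finset.range N, y (v k) := by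
      calc (N : ℝ) * (δ / 2 - 2 * N * ε) = ∑ _k ∈ Finset.range N, (δ / 2 - 2 * N * ε) := by
            simp [mul_comm]; ring
        _ ≤ ∑ k ∈ Finset.range N, y (v k) := by
            refine Finset.sum_le_sum fun k hk => ?_
            exact hyv ⟨k, Finset.mem_range.1 hk⟩
    nlinarith [(Nat.cast_pos (α := ℝ)).2 hNpos]
  -- take ε → 0
  have hfinal : (N : ℝ) * (δ / 2) ≤ y u₀ := by
    refine le_of_forall_pos_le_add fun ε' hε' => ?_
    have hN' : (0 : ℝ) < N := Nat.cast_pos.2 hNpos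
    have hc : (0 : ℝ) < 2 * N * N := by positivity
    have := key (ε' / (2 * N * N)) (by positivity)
    have heq : (N : ℝ) * (2 * N * (ε' / (2 * N * N))) = ε' := by
      field_simp
    linarith [this, heq]
  rw [le_div_iff₀ hδ]
  linarith
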